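/- Let τ > 0, let S₂, S₃ : D_τ → ℝ be continuous, and let b : [0,τ] → ℝ be continuous. If τ·(max_{D_τ}|S₂|)·(max_{[0,τ]}|b|) < 1, then there exists exactly one continuous function u : D_τ → ℝ satisfying the Volterra-type integral equation u(x,t) = S₃(x,t) + S₂(x,t)·∫₀^{t−x} b(ξ)·u(ξ, t−x) dξ for all (x,t) ∈ D_τ. -/

import Mathlib

open Real MeasureTheory BoundedContinuousFunction

/-- Let `D_τ = {(x,t) : 0 ≤ x ≤ t ≤ τ}`, let `S₂, S₃` be continuous on
`D_τ` and `b` continuous on `[0,τ]`.  If `τ·(max_{D_τ}|S₂|)·(max_{[0,τ]}|b|) < 1`, then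
there is exactly one continuous `u : D_τ → ℝ` with
`u(x,t) = S₃(x,t) + S₂(x,t)·∫₀^{t−x} b(ξ)·u(ξ, t−x) dξ` on `D_τ`. -/
theorem stmt6 (τ : ℝ) (hτ : 0 < τ)
    (S₂ S₃ : ℝ × ℝ → ℝ) (b : ℝ → ℝ)
    (hS₂ : ContinuousOn S₂ {q : ℝ × ℝ | 0 ≤ q.1 ∧ q.1 ≤ q.2 ∧ q.2 ≤ τ})
    (hS₃ : ContinuousOn S₃ {q : ℝ × ℝ | 0 ≤ q.1 ∧ q.1 ≤ q.2 ∧ q.2 ≤ τ})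
    (hb : ContinuousOn b (Set.Icc 0 τ))
    (hsmall : τ * sSup ((fun q => |S₂ q|) '' {q : ℝ × ℝ | 0 ≤ q.1 ∧ q.1 ≤ q.2 ∧ q.2 ≤ τ})
        * sSup ((fun x => |b x|) '' Set.Icc 0 τ) < 1) :
    (∃ u : ℝ × ℝ → ℝ,
      ContinuousOn u {q : ℝ × ℝ | 0 ≤ q.1 ∧ q.1 ≤ q.2 ∧ q.2 ≤ τ} ∧
      ∀ q ∈ {q : ℝ × ℝ | 0 ≤ q.1 ∧ q.1 ≤ q.2 ∧ q.2 ≤ τ},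
        u q = S₃ q + S₂ q * ∫ ξ in (0:ℝ)..(q.2 - q.1), b ξ * u (ξ, q.2 - q.1)) ∧
    (∀ u v : ℝ × ℝ → ℝ,
      (ContinuousOn u {q : ℝ × ℝ | 0 ≤ q.1 ∧ q.1 ≤ q.2 ∧ q.2 ≤ τ} ∧
        ∀ q ∈ {q : ℝ × ℝ | 0 ≤ q.1 ∧ q.1 ≤ q.2 ∧ q.2 ≤ τ},
          u q = S₃ q + S₂ q * ∫ ξ in (0:ℝ)..(q.2 - q.1), b ξ * u (ξ, q.2 - q.1)) →
      (ContinuousOn v {q : ℝ × ℝ | 0 ≤ q.1 ∧ q.1 ≤ q.2 ∧ q.2 ≤ τ} ∧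
        ∀ q ∈ {q : ℝ × ℝ | 0 ≤ q.1 ∧ q.1 ≤ q.2 ∧ q.2 ≤ τ},
          v q = S₃ q + S₂ q * ∫ ξ in (0:ℝ)..(q.2 - q.1), b ξ * v (ξ, q.2 - q.1)) →
      Set.EqOn u v {q : ℝ × ℝ | 0 ≤ q.1 ∧ q.1 ≤ q.2 ∧ q.2 ≤ τ}) := by
  classical
  set D : Set (ℝ × ℝ) := {q : ℝ × ℝ | 0 ≤ q.1 ∧ q.1 ≤ q.2 ∧ q.2 ≤ τ} with hDdef
  set M₂ : ℝ := sSup ((fun q => |S₂ q|) '' D) with hM₂def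
  set Mb : ℝ := sSup ((fun x => |b x|) '' Set.Icc 0 τ) with hMbdef
  -- Basic facts about `D`.
  have hDclosed : IsClosed D := by
    have : D = {q : ℝ × ℝ | 0 ≤ q.1} ∩ ({q | q.1 ≤ q.2} ∩ {q | q.2 ≤ τ}) := rfl
    rw [this]
    exact (isClosed_le continuous_const continuous_fst).inter
      ((isClosed_le continuous_fst continuous_snd).inter
        (isClosed_le continuous_snd continuous_const))
  have hDcomp : IsCompact D := by
    refine (isCompact_Icc (a := ((0:ℝ), (0:ℝ))) (b := (τ, τ))).of_isClosed_subset hDclosed ?_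
    rintro ⟨x, t⟩ ⟨h1, h2, h3⟩
    simp only [Set.mem_Icc, Prod.le_def]
    exact ⟨⟨h1, h1.trans h2⟩, ⟨h2.trans h3, h3⟩⟩
  have h0D : ((0:ℝ), (0:ℝ)) ∈ D := ⟨le_refl 0, le_refl 0, hτ.le⟩
  have h0I : (0:ℝ) ∈ Set.Icc (0:ℝ) τ := ⟨le_rfl, hτ.le⟩
  -- Bounds via suprema.
  have hM₂ : ∀ q ∈ D, |S₂ q| ≤ M₂ := fun q hq =>
    le_csSup (hDcomp.bddAbove_image hS₂.abs) (Set.mem_image_of_mem _ hq)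
  have hM₂0 : 0 ≤ M₂ := (abs_nonneg _).trans (hM₂ _ h0D)
  have hMb : ∀ x ∈ Set.Icc (0:ℝ) τ, |b x| ≤ Mb := fun x hx =>
    le_csSup (isCompact_Icc.bddAbove_image hb.abs) (Set.mem_image_of_mem _ hx)
  have hMb0 : 0 ≤ Mb := (abs_nonneg _).trans (hMb _ h0I)
  set k : ℝ := τ * M₂ * Mb with hkdef
  have hk0 : 0 ≤ k := by positivity
  have hk1 : k < 1 := hsmall
  -- Tietze extensions.
  haveI : CompactSpace (Set.Icc (0:ℝ) τ) := isCompact_iff_compactSpace.mp isCompact_Icc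
  haveI : CompactSpace D := isCompact_iff_compactSpace.mp hDcomp
  obtain ⟨b', hbnorm, hbeq⟩ := BoundedContinuousFunction.exists_norm_eq_restrict_eq_of_closed
    (BoundedContinuousFunction.mkOfCompact ⟨(Set.Icc 0 τ).restrict b, hb.restrict⟩) isClosed_Icc
  have hb'b : ∀ x ∈ Set.Icc (0:ℝ) τ, b' x = b x := by
    intro x hx
    have := congrFun (congrArg DFunLike.coe hbeq) ⟨x, hx⟩
    exact this
  have hb'le : ∀ x, |b' x| ≤ Mb := by
    intro x
    have h1 : ‖b' x‖ ≤ ‖b'‖ := b'.norm_coe_le_norm x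
    rw [hbnorm] at h1
    refine h1.trans ((BoundedContinuousFunction.norm_le hMb0).mpr ?_)
    rintro ⟨x, hx⟩; exact hMb x hx
  obtain ⟨S₂', h2norm, h2eq⟩ := BoundedContinuousFunction.exists_norm_eq_restrict_eq_of_closed
    (BoundedContinuousFunction.mkOfCompact ⟨D.restrict S₂, hS₂.restrict⟩) hDclosed
  have hS₂'eq : ∀ q ∈ D, S₂' q = S₂ q := by
    intro q hq
    have := congrFun (congrArg DFunLike.coe h2eq) ⟨q, hq⟩
    exact this
  have hS₂'le : ∀ q, |S₂' q| ≤ M₂ := by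
    intro q
    have h1 : ‖S₂' q‖ ≤ ‖S₂'‖ := S₂'.norm_coe_le_norm q
    rw [h2norm] at h1
    refine h1.trans ((BoundedContinuousFunction.norm_le hM₂0).mpr ?_)
    rintro ⟨q, hq⟩; exact hM₂ q hq
  obtain ⟨S₃', h3norm, h3eq⟩ := BoundedContinuousFunction.exists_norm_eq_restrict_eq_of_closed
    (BoundedContinuousFunction.mkOfCompact ⟨D.restrict S₃, hS₃.restrict⟩) hDclosed
  have hS₃'eq : ∀ q ∈ D, S₃' q = S₃ q := by
    intro q hq
    have := congrFun (congrArg DFunLike.coe h3eq) ⟨q, hq⟩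
    exact this
  -- The clipping function.
  set clip : ℝ → ℝ := fun s => max 0 (min s τ) with hclipdef
  have hclipmem : ∀ s, clip s ∈ Set.Icc (0:ℝ) τ :=
    fun s => ⟨le_max_left _ _, max_le hτ.le (min_le_right _ _)⟩
  have hclipeq : ∀ s ∈ Set.Icc (0:ℝ) τ, clip s = s := by
    intro s hs
    simp [hclipdef, min_eq_left hs.2, max_eq_right hs.1]
  have hclipcont : Continuous clip := continuous_const.max (continuous_id.min continuous_const)
  -- The fixed point operator on bounded continuous functions.
  set F : (ℝ →ᵇ ℝ) → ℝ → ℝ → ℝ :=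
    fun w s ξ => b' ξ * (S₃' (ξ, s) + S₂' (ξ, s) * w (s - ξ)) with hFdef
  have hFcont : ∀ w : ℝ →ᵇ ℝ, Continuous (Function.uncurry (F w)) := by
    intro w; rw [hFdef]; unfold Function.uncurry; fun_prop
  have hFcont1 : ∀ (w : ℝ →ᵇ ℝ) (s : ℝ), Continuous (F w s) := by
    intro w s
    exact (hFcont w).comp (Continuous.prodMk_right s)
  set Tf : (ℝ →ᵇ ℝ) → ℝ → ℝ := fun w s => ∫ ξ in (0:ℝ)..clip s, F w s ξ with hTfdef
  have hTfcont : ∀ w, Continuous (Tf w) := fun w =>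
    intervalIntegral.continuous_parametric_intervalIntegral_of_continuous (hFcont w) hclipcont
  have habsclip : ∀ s, |clip s - 0| ≤ τ := by
    intro s
    rw [sub_zero, abs_of_nonneg (hclipmem s).1]
    exact (hclipmem s).2
  have hTfbd : ∀ w s, ‖Tf w s‖ ≤ Mb * (‖S₃'‖ + M₂ * ‖w‖) * τ := by
    intro w s
    have hC : (0:ℝ) ≤ Mb * (‖S₃'‖ + M₂ * ‖w‖) := by positivity
    have h := intervalIntegral.norm_integral_le_of_norm_le_const
      (C := Mb * (‖S₃'‖ + M₂ * ‖w‖)) (f := F w s) (a := 0) (b := clip s) ?_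
    · exact h.trans (mul_le_mul_of_nonneg_left (habsclip s) hC)
    · intro ξ _
      have h1 : |S₃' (ξ, s) + S₂' (ξ, s) * w (s - ξ)| ≤ ‖S₃'‖ + M₂ * ‖w‖ := by
        refine (abs_add_le _ _).trans ?_
        refine add_le_add (S₃'.norm_coe_le_norm (ξ, s)) ?_
        rw [abs_mul]
        exact mul_le_mul (hS₂'le _) (w.norm_coe_le_norm (s - ξ)) (abs_nonneg _) hM₂0
      calc ‖F w s ξ‖ = |b' ξ| * |S₃' (ξ, s) + S₂' (ξ, s) * w (s - ξ)| := by
            rw [hFdef]; exact abs_mul _ _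
        _ ≤ Mb * (‖S₃'‖ + M₂ * ‖w‖) :=
            mul_le_mul (hb'le ξ) h1 (abs_nonneg _) hMb0
  set T : (ℝ →ᵇ ℝ) → (ℝ →ᵇ ℝ) := fun w =>
    BoundedContinuousFunction.ofNormedAddCommGroup (Tf w) (hTfcont w) _ (hTfbd w) with hTdef
  have hTapp : ∀ w s, T w s = Tf w s := by intro w s; rw [hTdef]; rfl
  have hFint : ∀ (w : ℝ →ᵇ ℝ) (s a c : ℝ), IntervalIntegrable (F w s) volume a c :=
    fun w s a c => (hFcont1 w s).intervalIntegrable a c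
  have hTdist : ∀ w v, dist (T w) (T v) ≤ k * dist w v := by
    intro w v
    have hkd : (0:ℝ) ≤ k * dist w v := mul_nonneg hk0 dist_nonneg
    refine (BoundedContinuousFunction.dist_le hkd).mpr ?_
    intro s
    rw [Real.dist_eq, hTapp, hTapp, hTfdef]
    have hsub : Tf w s - Tf v s = ∫ ξ in (0:ℝ)..clip s, (F w s ξ - F v s ξ) :=
      (intervalIntegral.integral_sub (hFint w s 0 (clip s)) (hFint v s 0 (clip s))).symm
    rw [hTfdef] at hsub
    rw [hsub]
    have hC : (0:ℝ) ≤ Mb * M₂ * dist w v := by positivity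
    have h := intervalIntegral.norm_integral_le_of_norm_le_const
      (C := Mb * M₂ * dist w v) (f := fun ξ => F w s ξ - F v s ξ) (a := 0) (b := clip s) ?_
    · refine h.trans ?_
      calc Mb * M₂ * dist w v * |clip s - 0| ≤ Mb * M₂ * dist w v * τ :=
            mul_le_mul_of_nonneg_left (habsclip s) hC
        _ = k * dist w v := by rw [hkdef]; ring
    · intro ξ _
      have heq : F w s ξ - F v s ξ = b' ξ * S₂' (ξ, s) * (w (s - ξ) - v (s - ξ)) := by
        rw [hFdef]; ring
      have hwv : |w (s - ξ) - v (s - ξ)| ≤ dist w v := by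
        rw [← Real.dist_eq]
        exact BoundedContinuousFunction.dist_coe_le_dist _
      calc ‖F w s ξ - F v s ξ‖ = |b' ξ| * |S₂' (ξ, s)| * |w (s - ξ) - v (s - ξ)| := by
            rw [heq, Real.norm_eq_abs, abs_mul, abs_mul]
        _ ≤ Mb * M₂ * dist w v := by
            refine mul_le_mul (mul_le_mul (hb'le ξ) (hS₂'le _) (abs_nonneg _) hMb0)
              hwv (abs_nonneg _) (by positivity)
  -- Banach fixed point.
  have hcontr : ContractingWith ⟨k, hk0⟩ T := by
    constructor
    · exact_mod_cast hk1
    · exact LipschitzWith.of_dist_le_mul (fun w v => hTdist w v)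
  set w₀ : ℝ →ᵇ ℝ := ContractingWith.fixedPoint T hcontr with hw₀def
  have hfix : T w₀ = w₀ := hcontr.fixedPoint_isFixedPt
  have hw₀ : ∀ s, w₀ s = ∫ ξ in (0:ℝ)..clip s, F w₀ s ξ := by
    intro s
    conv_lhs => rw [← hfix]
    rw [hTapp, hTfdef]
  -- The solution.
  set u₀ : ℝ × ℝ → ℝ := fun q => S₃ q + S₂ q * w₀ (q.2 - q.1) with hu₀def
  have hu₀cont : ContinuousOn u₀ D := by
    refine hS₃.add (hS₂.mul ?_)
    exact (w₀.continuous.comp (continuous_snd.sub continuous_fst)).continuousOn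
  have hmemD : ∀ q : ℝ × ℝ, q ∈ D → q.2 - q.1 ∈ Set.Icc (0:ℝ) τ := by
    rintro ⟨x, t⟩ ⟨h1, h2, h3⟩
    refine ⟨sub_nonneg.mpr h2, ?_⟩
    show t - x ≤ τ
    linarith
  have hkey : ∀ q ∈ D, (∫ ξ in (0:ℝ)..(q.2 - q.1), b ξ * u₀ (ξ, q.2 - q.1)) = w₀ (q.2 - q.1) := by
    intro q hq
    obtain ⟨hs0, hsτ⟩ := hmemD q hq
    rw [hw₀ (q.2 - q.1), hclipeq _ ⟨hs0, hsτ⟩]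
    apply intervalIntegral.integral_congr
    intro ξ hξ
    rw [Set.uIcc_of_le hs0] at hξ
    have hmem : (ξ, q.2 - q.1) ∈ D := ⟨hξ.1, hξ.2, hsτ⟩
    rw [hFdef, hu₀def]
    simp only
    rw [hb'b ξ ⟨hξ.1, hξ.2.trans hsτ⟩, hS₂'eq _ hmem, hS₃'eq _ hmem]
  refine ⟨⟨u₀, hu₀cont, ?_⟩, ?_⟩
  · intro q hq
    rw [hkey q hq]
  -- Uniqueness.
  intro u v hu hv q hq
  obtain ⟨huc, hueq⟩ := hu
  obtain ⟨hvc, hveq⟩ := hv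
  set wu : ℝ → ℝ := fun s => ∫ ξ in (0:ℝ)..s, b ξ * u (ξ, s) with hwudef
  set wv : ℝ → ℝ := fun s => ∫ ξ in (0:ℝ)..s, b ξ * v (ξ, s) with hwvdef
  obtain ⟨Cu, hCu⟩ := hDcomp.exists_bound_of_continuousOn huc
  obtain ⟨Cv, hCv⟩ := hDcomp.exists_bound_of_continuousOn hvc
  have hCu0 : 0 ≤ Cu := (norm_nonneg _).trans (hCu _ h0D)
  have hCv0 : 0 ≤ Cv := (norm_nonneg _).trans (hCv _ h0D)
  -- integrability of slices
  have hslice : ∀ (f : ℝ × ℝ → ℝ), ContinuousOn f D → ∀ s ∈ Set.Icc (0:ℝ) τ,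
      IntervalIntegrable (fun ξ => b ξ * f (ξ, s)) volume 0 s := by
    intro f hf s hs
    apply ContinuousOn.intervalIntegrable
    rw [Set.uIcc_of_le hs.1]
    refine ContinuousOn.mul (hb.mono (Set.Icc_subset_Icc le_rfl hs.2)) ?_
    refine hf.comp (Continuous.continuousOn (by fun_prop)) ?_
    intro ξ hξ
    exact ⟨hξ.1, hξ.2, hs.2⟩
  -- pointwise difference identity
  have hdiff : ∀ s ∈ Set.Icc (0:ℝ) τ, ∀ ξ ∈ Set.Icc (0:ℝ) s,
      b ξ * u (ξ, s) - b ξ * v (ξ, s) = b ξ * S₂ (ξ, s) * (wu (s - ξ) - wv (s - ξ)) := by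
    intro s hs ξ hξ
    have hmem : ((ξ, s) : ℝ × ℝ) ∈ D := ⟨hξ.1, hξ.2, hs.2⟩
    have h1 := hueq (ξ, s) hmem
    have h2 := hveq (ξ, s) hmem
    simp only at h1 h2
    rw [h1, h2, hwudef, hwvdef]
    ring
  -- key step: a uniform bound improves by a factor k
  have hstep : ∀ C : ℝ, 0 ≤ C → (∀ r ∈ Set.Icc (0:ℝ) τ, |wu r - wv r| ≤ C) →
      ∀ s ∈ Set.Icc (0:ℝ) τ, |wu s - wv s| ≤ k * C := by
    intro C hC0 hC s hs
    have hsub : wu s - wv s = ∫ ξ in (0:ℝ)..s, (b ξ * u (ξ, s) - b ξ * v (ξ, s)) :=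
      (intervalIntegral.integral_sub (hslice u huc s hs) (hslice v hvc s hs)).symm
    rw [hsub]
    have h := intervalIntegral.norm_integral_le_of_norm_le_const
      (C := Mb * M₂ * C) (f := fun ξ => b ξ * u (ξ, s) - b ξ * v (ξ, s)) (a := 0) (b := s) ?_
    · refine h.trans ?_
      have : |s - 0| ≤ τ := by rw [sub_zero, abs_of_nonneg hs.1]; exact hs.2
      calc Mb * M₂ * C * |s - 0| ≤ Mb * M₂ * C * τ :=
            mul_le_mul_of_nonneg_left this (by positivity)
        _ = k * C := by rw [hkdef]; ring
    · intro ξ hξ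
      rw [Set.uIoc_of_le hs.1] at hξ
      have hξ' : ξ ∈ Set.Icc (0:ℝ) s := ⟨hξ.1.le, hξ.2⟩
      have hmem : ((ξ, s) : ℝ × ℝ) ∈ D := ⟨hξ'.1, hξ'.2, hs.2⟩
      show ‖b ξ * u (ξ, s) - b ξ * v (ξ, s)‖ ≤ Mb * M₂ * C
      rw [hdiff s hs ξ hξ']
      have hr : s - ξ ∈ Set.Icc (0:ℝ) τ := ⟨by linarith [hξ'.2], by linarith [hξ.1, hs.2]⟩
      calc ‖b ξ * S₂ (ξ, s) * (wu (s - ξ) - wv (s - ξ))‖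
          = |b ξ| * |S₂ (ξ, s)| * |wu (s - ξ) - wv (s - ξ)| := by rw [Real.norm_eq_abs, abs_mul, abs_mul]
        _ ≤ Mb * M₂ * C := by
            refine mul_le_mul (mul_le_mul (hMb ξ ⟨hξ'.1, hξ'.2.trans hs.2⟩) (hM₂ _ hmem)
              (abs_nonneg _) hMb0) (hC _ hr) (abs_nonneg _) (by positivity)
  -- initial bound
  have hinit : ∀ s ∈ Set.Icc (0:ℝ) τ, |wu s - wv s| ≤ Mb * (Cu + Cv) * τ := by
    intro s hs
    have hsub : wu s - wv s = ∫ ξ in (0:ℝ)..s, (b ξ * u (ξ, s) - b ξ * v (ξ, s)) :=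
      (intervalIntegral.integral_sub (hslice u huc s hs) (hslice v hvc s hs)).symm
    rw [hsub]
    have h := intervalIntegral.norm_integral_le_of_norm_le_const
      (C := Mb * (Cu + Cv)) (f := fun ξ => b ξ * u (ξ, s) - b ξ * v (ξ, s)) (a := 0) (b := s) ?_
    · refine h.trans ?_
      have : |s - 0| ≤ τ := by rw [sub_zero, abs_of_nonneg hs.1]; exact hs.2
      exact mul_le_mul_of_nonneg_left this (by positivity)
    · intro ξ hξ
      rw [Set.uIoc_of_le hs.1] at hξ
      have hmem : ((ξ, s) : ℝ × ℝ) ∈ D := ⟨hξ.1.le, hξ.2, hs.2⟩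
      calc ‖b ξ * u (ξ, s) - b ξ * v (ξ, s)‖
          ≤ |b ξ * u (ξ, s)| + |b ξ * v (ξ, s)| := abs_sub _ _
        _ = |b ξ| * |u (ξ, s)| + |b ξ| * |v (ξ, s)| := by rw [abs_mul, abs_mul]
        _ ≤ Mb * Cu + Mb * Cv := by
            have hbb := hMb ξ ⟨hξ.1.le, hξ.2.trans hs.2⟩
            exact add_le_add
              (mul_le_mul hbb (hCu _ hmem) (abs_nonneg _) hMb0)
              (mul_le_mul hbb (hCv _ hmem) (abs_nonneg _) hMb0)
        _ = Mb * (Cu + Cv) := by ring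
  -- iterate
  have hiter : ∀ n : ℕ, ∀ s ∈ Set.Icc (0:ℝ) τ, |wu s - wv s| ≤ k ^ n * (Mb * (Cu + Cv) * τ) := by
    intro n
    induction n with
    | zero => simpa using hinit
    | succ n ih =>
      have h := hstep (k ^ n * (Mb * (Cu + Cv) * τ)) (by positivity) ih
      intro s hs
      calc |wu s - wv s| ≤ k * (k ^ n * (Mb * (Cu + Cv) * τ)) := h s hs
        _ = k ^ (n + 1) * (Mb * (Cu + Cv) * τ) := by ring
  have hwuv : ∀ s ∈ Set.Icc (0:ℝ) τ, wu s = wv s := by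
    intro s hs
    have htend : Filter.Tendsto (fun n : ℕ => k ^ n * (Mb * (Cu + Cv) * τ))
        Filter.atTop (nhds 0) := by
      have := (tendsto_pow_atTop_nhds_zero_of_lt_one hk0 hk1).mul_const (Mb * (Cu + Cv) * τ)
      simpa using this
    have hle : |wu s - wv s| ≤ 0 :=
      ge_of_tendsto htend (Filter.Eventually.of_forall (fun n => hiter n s hs))
    have : wu s - wv s = 0 := abs_eq_zero.mp (le_antisymm hle (abs_nonneg _))
    linarith [this]
  -- conclude
  have h1 := hueq q hq
  have h2 := hveq q hq
  rw [h1, h2]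
  have : wu (q.2 - q.1) = wv (q.2 - q.1) := hwuv _ (hmemD q hq)
  rw [hwudef, hwvdef] at this
  simp only at this
  rw [this]
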